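/- Fix an integer n ≥ 2 and let C be a matrix in the hollow symmetric Monge polytope HM_n. Then the function d(i,j) = c_{i,j} is a metric on {1,…,n} (that is, c_{i,j} ≤ c_{i,k} + c_{k,j} for all i, j, k, and c_{i,j} > 0 whenever i ≠ j) if and only if there exist strictly positive real numbers λ_1, …, λ_{n−1} with Σ_{a=1}^{n−1} λ_a = 1 such that C = Σ_{a=1}^{n−1} λ_a · (1/(2a(n−a))) · NESW(a×(n−a)); i.e., if and only if C lies in the relative interior of the metric face of HM_n. -/

import Mathlib

open Finset

/-- The Monge property for an `n × n` real matrix (indices are 0-based). -/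
def IsMonge {n : ℕ} (C : Matrix (Fin n) (Fin n) ℝ) : Prop :=
  ∀ i I j J : Fin n, i < I → j < J → C i j + C I J ≤ C i J + C I j

/-- The hollow symmetric Monge polytope: symmetric matrices with zero diagonal,
nonnegative entries summing to 1, and the Monge property. -/
def HM (n : ℕ) : Set (Matrix (Fin n) (Fin n) ℝ) :=
  {C | C.IsSymm ∧ (∀ i, C i i = 0) ∧ (∀ i j, 0 ≤ C i j) ∧
    (∑ i, ∑ j, C i j) = 1 ∧ IsMonge C}

/-- `NESW n a b` is the `n × n` 0/1 matrix whose (1-based) `(k, l)` entry is 1 iff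
`(k ≤ a ∧ l > n - b) ∨ (k > n - b ∧ l ≤ a)`. -/
def NESW (n a b : ℕ) : Matrix (Fin n) (Fin n) ℝ :=
  Matrix.of fun k l =>
    if (k.val + 1 ≤ a ∧ n - b < l.val + 1) ∨ (n - b < k.val + 1 ∧ l.val + 1 ≤ a) then 1 else 0

lemma nesw_apply (n a : ℕ) (ha : a ≤ n) (k l : Fin n) :
    NESW n a (n - a) k l = if (k.val < a ∧ a ≤ l.val) ∨ (l.val < a ∧ a ≤ k.val) then 1 else 0 := by
  have h : ((k.val + 1 ≤ a ∧ n - (n - a) < l.val + 1) ∨ (n - (n - a) < k.val + 1 ∧ l.val + 1 ≤ a))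
      ↔ ((k.val < a ∧ a ≤ l.val) ∨ (l.val < a ∧ a ≤ k.val)) := by omega
  simp only [NESW, Matrix.of_apply, h]

lemma entry_formula (n : ℕ) (v : ℕ → ℝ) (k l : Fin n) :
    (∑ a ∈ Finset.Icc 1 (n - 1), v a • NESW n a (n - a)) k l
      = ∑ a ∈ Finset.Icc (min k.val l.val + 1) (max k.val l.val), v a := by
  have hk := k.isLt; have hl := l.isLt
  rw [Matrix.sum_apply]
  have step : ∀ a ∈ Finset.Icc 1 (n - 1),
      (v a • NESW n a (n - a)) k l
        = if min k.val l.val < a ∧ a ≤ max k.val l.val then v a else 0 := by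
    intro a ha
    simp only [Finset.mem_Icc] at ha
    rw [Matrix.smul_apply, nesw_apply n a (by omega), smul_eq_mul]
    have hcond : ((k.val < a ∧ a ≤ l.val) ∨ (l.val < a ∧ a ≤ k.val))
        ↔ (min k.val l.val < a ∧ a ≤ max k.val l.val) := by omega
    rw [if_congr hcond rfl rfl, mul_ite, mul_one, mul_zero]
  rw [Finset.sum_congr rfl step, ← Finset.sum_filter]
  apply Finset.sum_congr _ (fun a _ => rfl)
  ext a
  simp only [Finset.mem_filter, Finset.mem_Icc]
  omega

lemma nesw_total (n a : ℕ) (h1 : 1 ≤ a) (h2 : a < n) :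
    ∑ k : Fin n, ∑ l : Fin n, NESW n a (n - a) k l = 2 * (a : ℝ) * ((n - a : ℕ) : ℝ) := by
  have hcard1 : ((Finset.range n).filter (fun i => a ≤ i)).card = n - a := by
    rw [show (Finset.range n).filter (fun i => a ≤ i) = Finset.Ico a n by
      ext i; simp [Finset.mem_Ico]; omega]
    exact Nat.card_Ico a n
  have hcard2 : ((Finset.range n).filter (fun i => i < a)).card = a := by
    rw [show (Finset.range n).filter (fun i => i < a) = Finset.range a by ext i; simp; omega]
    exact Finset.card_range a
  have inner : ∀ k : Fin n, ∑ l : Fin n, NESW n a (n - a) k l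
      = if k.val < a then ((n - a : ℕ) : ℝ) else (a : ℝ) := by
    intro k
    by_cases hk : k.val < a
    · rw [if_pos hk]
      have : ∀ l : Fin n, NESW n a (n - a) k l = if a ≤ l.val then (1:ℝ) else 0 := by
        intro l
        rw [nesw_apply n a h2.le]
        exact if_congr (by omega) rfl rfl
      rw [Finset.sum_congr rfl (fun l _ => this l)]
      rw [Fin.sum_univ_eq_sum_range (fun i => if a ≤ i then (1:ℝ) else 0)]
      rw [Finset.sum_boole, hcard1]
    · rw [if_neg hk]
      have : ∀ l : Fin n, NESW n a (n - a) k l = if l.val < a then (1:ℝ) else 0 := by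
        intro l
        rw [nesw_apply n a h2.le]
        exact if_congr (by omega) rfl rfl
      rw [Finset.sum_congr rfl (fun l _ => this l)]
      rw [Fin.sum_univ_eq_sum_range (fun i => if i < a then (1:ℝ) else 0)]
      rw [Finset.sum_boole, hcard2]
  rw [Finset.sum_congr rfl (fun k _ => inner k)]
  rw [Fin.sum_univ_eq_sum_range (fun i => if i < a then ((n - a : ℕ) : ℝ) else (a:ℝ))]
  rw [Finset.sum_ite, Finset.sum_const, Finset.sum_const, hcard2]
  have hco : ((Finset.range n).filter (fun i => ¬ i < a)).card = n - a := by
    rw [show (Finset.range n).filter (fun i => ¬ i < a) = Finset.Ico a n by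
      ext i; simp [Finset.mem_Ico]; omega]
    exact Nat.card_Ico a n
  rw [hco]
  have hc : ((n - a : ℕ) : ℝ) = (n : ℝ) - (a : ℝ) := by
    have := h2.le
    push_cast [this]
    ring
  rw [hc, nsmul_eq_mul, nsmul_eq_mul, hc]
  ring

/-- A matrix in the hollow symmetric Monge polytope induces a true metric (triangle
inequality, and strictly positive off-diagonal entries) if and only if it is a convex
combination with *strictly positive* coefficients of the matrices
`(1/(2a(n-a))) • NESW (a × (n-a))` for `1 ≤ a ≤ n - 1`, i.e. iff it lies in the relative
interior of the metric face of `HM n`. -/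
theorem metric_iff_interior_metric_face (n : ℕ) (hn : 2 ≤ n)
    (C : Matrix (Fin n) (Fin n) ℝ) (hC : C ∈ HM n) :
    ((∀ i j k : Fin n, C i j ≤ C i k + C k j) ∧ (∀ i j : Fin n, i ≠ j → 0 < C i j)) ↔
      ∃ lam : ℕ → ℝ,
        (∀ a ∈ Finset.Icc 1 (n - 1), 0 < lam a) ∧
        (∑ a ∈ Finset.Icc 1 (n - 1), lam a) = 1 ∧
        C = ∑ a ∈ Finset.Icc 1 (n - 1),
          lam a • ((1 / (2 * (a : ℝ) * ((n - a : ℕ) : ℝ))) • NESW n a (n - a)) := by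
  obtain ⟨hsym, hdiag, hnn, hsumC, hmonge⟩ := hC
  have hsymm : ∀ i j : Fin n, C i j = C j i := fun i j => hsym.apply j i
  have hXpos : ∀ a : ℕ, 1 ≤ a → a ≤ n - 1 → (0:ℝ) < 2 * (a : ℝ) * ((n - a : ℕ) : ℝ) := by
    intro a h1 h2
    have ha' : (0:ℝ) < (a:ℝ) := by exact_mod_cast Nat.pos_of_ne_zero (by omega)
    have hb' : (0:ℝ) < ((n - a : ℕ) : ℝ) := by
      have : 0 < n - a := by omega
      exact_mod_cast this
    positivity
  constructor
  · rintro ⟨htri, hpos⟩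
    set w : ℕ → ℝ := fun a => if h : 1 ≤ a ∧ a < n then C ⟨a - 1, by omega⟩ ⟨a, h.2⟩ else 0
      with hw
    have wval : ∀ (a : ℕ) (h1 : 1 ≤ a) (h2 : a < n) (i j : Fin n),
        i.val = a - 1 → j.val = a → w a = C i j := by
      intro a h1 h2 i j hi hj
      rw [hw]
      simp only
      rw [dif_pos ⟨h1, h2⟩]
      congr 1
      · exact Fin.ext hi.symm
      · exact Fin.ext hj.symm
    have key : ∀ (m : ℕ) (hm : m < n) (k : Fin n), k.val < m →
        C k ⟨m, hm⟩ = ∑ a ∈ Finset.Icc (k.val + 1) m, w a := by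
      intro m
      induction m with
      | zero => intro hm k hk; omega
      | succ m ih =>
        intro hm k hk
        have hm' : m < n := by omega
        have wstep : w (m + 1) = C ⟨m, hm'⟩ ⟨m + 1, hm⟩ :=
          wval (m + 1) (by omega) hm ⟨m, hm'⟩ ⟨m + 1, hm⟩ (by simp) rfl
        rcases Nat.lt_or_ge k.val m with hkm | hkm
        · have heq : C k ⟨m + 1, hm⟩ = C k ⟨m, hm'⟩ + C ⟨m, hm'⟩ ⟨m + 1, hm⟩ := by
            have h1 := htri k ⟨m + 1, hm⟩ ⟨m, hm'⟩
            have h2 := hmonge k ⟨m, hm'⟩ ⟨m, hm'⟩ ⟨m + 1, hm⟩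
              (by rw [Fin.lt_def]; exact hkm) (by rw [Fin.lt_def]; simp)
            have h3 := hdiag ⟨m, hm'⟩
            linarith
          rw [heq, ih hm' k hkm,
            Finset.sum_Icc_succ_top (show k.val + 1 ≤ m + 1 by omega) w, wstep]
        · have hkeq : k = ⟨m, hm'⟩ := Fin.ext (show k.val = m by omega)
          subst hkeq
          simp only [Finset.Icc_self, Finset.sum_singleton]
          exact wstep.symm
    have centry : ∀ k l : Fin n,
        C k l = ∑ a ∈ Finset.Icc (min k.val l.val + 1) (max k.val l.val), w a := by
      intro k l
      rcases lt_trichotomy k.val l.val with h | h | h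
      · have := key l.val l.isLt k h
        simpa [min_eq_left h.le, max_eq_right h.le, Fin.eta] using this
      · have : k = l := Fin.ext h
        subst this
        rw [hdiag k]
        rw [show Finset.Icc (min k.val k.val + 1) (max k.val k.val) = ∅ by
          apply Finset.Icc_eq_empty; omega, Finset.sum_empty]
      · have := key k.val k.isLt l h
        rw [hsymm k l]
        simpa [min_eq_right h.le, max_eq_left h.le, Fin.eta] using this
    set lam : ℕ → ℝ := fun a => (2 * (a : ℝ) * ((n - a : ℕ) : ℝ)) * w a with hlam
    have vw : ∀ a ∈ Finset.Icc 1 (n - 1),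
        lam a * (1 / (2 * (a : ℝ) * ((n - a : ℕ) : ℝ))) = w a := by
      intro a ha
      simp only [Finset.mem_Icc] at ha
      have hX := hXpos a ha.1 ha.2
      have hX' : (a:ℝ) * ((n - a : ℕ) : ℝ) ≠ 0 := by
        intro h; rw [mul_assoc, h, mul_zero] at hX; exact lt_irrefl _ hX
      rw [hlam]
      field_simp
      rw [div_eq_iff hX']; ring
    have Ceq : C = ∑ a ∈ Finset.Icc 1 (n - 1),
        (lam a * (1 / (2 * (a : ℝ) * ((n - a : ℕ) : ℝ)))) • NESW n a (n - a) := by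
      ext k l
      rw [entry_formula, centry]
      apply Finset.sum_congr rfl
      intro a ha
      have hk := k.isLt; have hl := l.isLt
      simp only [Finset.mem_Icc] at ha
      exact (vw a (Finset.mem_Icc.mpr ⟨by omega, by omega⟩)).symm
    refine ⟨lam, ?_, ?_, ?_⟩
    · intro a ha
      simp only [Finset.mem_Icc] at ha
      have hX := hXpos a ha.1 ha.2
      have hwpos : 0 < w a := by
        rw [wval a ha.1 (by omega) ⟨a - 1, by omega⟩ ⟨a, by omega⟩ rfl rfl]
        apply hpos
        intro hcontra
        have := congrArg Fin.val hcontra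
        simp only at this
        omega
      rw [hlam]
      exact mul_pos hX hwpos
    · have h1 : ∑ i, ∑ j, (∑ a ∈ Finset.Icc 1 (n - 1),
          (lam a * (1 / (2 * (a : ℝ) * ((n - a : ℕ) : ℝ)))) • NESW n a (n - a)) i j = 1 := by
        rw [← Ceq]; exact hsumC
      calc ∑ a ∈ Finset.Icc 1 (n - 1), lam a
          = ∑ a ∈ Finset.Icc 1 (n - 1),
              (lam a * (1 / (2 * (a : ℝ) * ((n - a : ℕ) : ℝ))))
                * (∑ k : Fin n, ∑ l : Fin n, NESW n a (n - a) k l) := by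
            apply Finset.sum_congr rfl
            intro a ha
            simp only [Finset.mem_Icc] at ha
            rw [nesw_total n a ha.1 (by omega)]
            have hX := hXpos a ha.1 ha.2
            have hX' : (a:ℝ) * ((n - a : ℕ) : ℝ) ≠ 0 := by
              intro h; rw [mul_assoc, h, mul_zero] at hX; exact lt_irrefl _ hX
            field_simp
            rw [eq_div_iff hX']; ring
        _ = ∑ a ∈ Finset.Icc 1 (n - 1), ∑ k : Fin n, ∑ l : Fin n,
              (lam a * (1 / (2 * (a : ℝ) * ((n - a : ℕ) : ℝ)))) * NESW n a (n - a) k l := by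
            apply Finset.sum_congr rfl
            intro a _
            rw [Finset.mul_sum]
            apply Finset.sum_congr rfl
            intro k _
            rw [Finset.mul_sum]
        _ = ∑ k : Fin n, ∑ l : Fin n, ∑ a ∈ Finset.Icc 1 (n - 1),
              (lam a * (1 / (2 * (a : ℝ) * ((n - a : ℕ) : ℝ)))) * NESW n a (n - a) k l := by
            rw [Finset.sum_comm]
            exact Finset.sum_congr rfl fun k _ => Finset.sum_comm
        _ = ∑ k : Fin n, ∑ l : Fin n, (∑ a ∈ Finset.Icc 1 (n - 1),
              (lam a * (1 / (2 * (a : ℝ) * ((n - a : ℕ) : ℝ)))) • NESW n a (n - a)) k l := by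
            apply Finset.sum_congr rfl
            intro k _
            apply Finset.sum_congr rfl
            intro l _
            rw [Matrix.sum_apply]
            apply Finset.sum_congr rfl
            intro a _
            rw [Matrix.smul_apply, smul_eq_mul]
        _ = 1 := h1
    · rw [Ceq]
      apply Finset.sum_congr rfl
      intro a _
      rw [smul_smul]
  · rintro ⟨lam, hlp, hls, hCeq⟩
    simp only [smul_smul] at hCeq
    set v : ℕ → ℝ := fun a => lam a * (1 / (2 * (a : ℝ) * ((n - a : ℕ) : ℝ))) with hv
    have centry : ∀ k l : Fin n,
        C k l = ∑ a ∈ Finset.Icc (min k.val l.val + 1) (max k.val l.val), v a := by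
      intro k l
      rw [hCeq]
      exact entry_formula n v k l
    have hvpos : ∀ a : ℕ, 1 ≤ a → a ≤ n - 1 → 0 < v a := by
      intro a h1 h2
      have hl := hlp a (Finset.mem_Icc.mpr ⟨h1, h2⟩)
      have hX := hXpos a h1 h2
      rw [hv]
      exact mul_pos hl (by positivity)
    constructor
    · intro i j k
      rw [centry i j, centry i k, centry k j]
      set S := Finset.Icc (min i.val j.val + 1) (max i.val j.val) with hS
      set T1 := Finset.Icc (min i.val k.val + 1) (max i.val k.val) with hT1
      set T2 := Finset.Icc (min k.val j.val + 1) (max k.val j.val) with hT2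
      have hnonneg : ∀ a ∈ T1 ∪ T2, 0 ≤ v a := by
        intro a ha
        have hi := i.isLt; have hj := j.isLt; have hk := k.isLt
        rw [Finset.mem_union, hT1, hT2] at ha
        simp only [Finset.mem_Icc] at ha
        exact (hvpos a (by omega) (by omega)).le
      have hsub : S ⊆ T1 ∪ T2 := by
        intro a ha
        rw [hS] at ha
        rw [Finset.mem_union, hT1, hT2]
        simp only [Finset.mem_Icc] at ha ⊢
        omega
      have h1 : ∑ a ∈ S, v a ≤ ∑ a ∈ T1 ∪ T2, v a :=
        Finset.sum_le_sum_of_subset_of_nonneg hsub (fun a ha _ => hnonneg a ha)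
      have h2 : ∑ a ∈ T1 ∪ T2, v a + ∑ a ∈ T1 ∩ T2, v a = ∑ a ∈ T1, v a + ∑ a ∈ T2, v a :=
        Finset.sum_union_inter
      have h3 : 0 ≤ ∑ a ∈ T1 ∩ T2, v a :=
        Finset.sum_nonneg fun a ha =>
          hnonneg a (Finset.mem_union_left _ (Finset.mem_of_mem_inter_left ha))
      linarith
    · intro i j hij
      rw [centry i j]
      have hij' : i.val ≠ j.val := fun h => hij (Fin.ext h)
      have hi := i.isLt; have hj := j.isLt
      apply Finset.sum_pos
      · intro a ha
        simp only [Finset.mem_Icc] at ha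
        exact hvpos a (by omega) (by omega)
      · rw [Finset.nonempty_Icc]
        omega
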